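/- For every natural number n, the Lucas-Fubini number satisfies the explicit formula 𝓛_n = Σ_{k=0}^{n} Σ_{j=0}^{k} (-1)^{k-j} · C(k,j) · ((α^{k+1} + β^{k+1})/k!) · j^n, where α = (1+√5)/2 and β = (1-√5)/2. -/

import Mathlib

/-- Stirling numbers of the second kind. -/
def stirling2 : ℕ → ℕ → ℕ
  | 0, 0 => 1
  | 0, _ + 1 => 0
  | _ + 1, 0 => 0
  | n + 1, k + 1 => stirling2 n k + (k + 1) * stirling2 n (k + 1)

/-- Lucas numbers. -/
def lucas : ℕ → ℕ
  | 0 => 2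
  | 1 => 1
  | n + 2 => lucas n + lucas (n + 1)

open Finset Real

lemma sign_split {j k : ℕ} (h : j ≤ k) : (-1:ℝ)^(k-j) = (-1)^k * (-1)^j := by
  obtain ⟨m, rfl⟩ := Nat.exists_eq_add_of_le h
  have : ((-1:ℝ)^j)^2 = 1 := by
    rw [← pow_mul, mul_comm, pow_mul]; norm_num
  rw [Nat.add_sub_cancel_left, pow_add]
  linear_combination (-(-1:ℝ)^m) * this

lemma alt_sum (k : ℕ) (hk : k ≠ 0) :
    ∑ j ∈ range (k+1), (-1:ℝ)^(k-j) * (k.choose j) = 0 := by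
  have h := Int.alternating_sum_range_choose (n := k)
  rw [if_neg hk] at h
  have h' : ∑ j ∈ range (k+1), (-1:ℝ)^j * (k.choose j) = 0 := by
    have := congrArg (fun z : ℤ => (z : ℝ)) h
    push_cast at this
    simpa using this
  calc ∑ j ∈ range (k+1), (-1:ℝ)^(k-j) * (k.choose j)
      = ∑ j ∈ range (k+1), (-1:ℝ)^k * ((-1)^j * (k.choose j)) := by
        refine Finset.sum_congr rfl fun j hj => ?_
        rw [sign_split (Nat.lt_succ_iff.mp (mem_range.mp hj))]; ring
    _ = (-1:ℝ)^k * ∑ j ∈ range (k+1), (-1:ℝ)^j * (k.choose j) := by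
        rw [Finset.mul_sum]
    _ = 0 := by rw [h', mul_zero]

lemma stirling_explicit (n k : ℕ) :
    (k.factorial : ℝ) * stirling2 n k =
      ∑ j ∈ range (k+1), (-1:ℝ)^(k-j) * (k.choose j) * (j:ℝ)^n := by
  induction n generalizing k with
  | zero =>
    rcases k with _ | k
    · simp [stirling2]
    · simp only [stirling2, pow_zero, mul_one]
      rw [alt_sum (k+1) (Nat.succ_ne_zero k)]
      simp [stirling2]
  | succ n ih =>
    rcases k with _ | k
    · simp [stirling2]
    · have hrec : ((k+1).factorial : ℝ) * stirling2 (n+1) (k+1)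
          = (k+1) * ((k.factorial : ℝ) * stirling2 n k)
            + (k+1) * (((k+1).factorial : ℝ) * stirling2 n (k+1)) := by
        show ((k+1).factorial : ℝ) * (stirling2 n k + (k + 1) * stirling2 n (k + 1) : ℕ) = _
        rw [Nat.factorial_succ]
        push_cast
        ring
      rw [hrec, ih k, ih (k+1)]
      -- RHS manipulation
      -- F (n+1) (k+1) = ∑_{j∈range(k+2)} (-1)^(k+1-j) C(k+1,j) j^(n+1)
      rw [Finset.sum_range_succ' (fun j => (-1:ℝ)^(k+1-j) * ((k+1).choose j) * (j:ℝ)^(n+1)) (k+1)]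
      have hzero : (-1:ℝ)^(k+1-0) * (((k+1).choose 0 : ℕ) : ℝ) * ((0:ℕ):ℝ)^(n+1) = 0 := by
        simp
      rw [hzero, add_zero]
      -- now ∑_{i∈range(k+1)} (-1)^(k-i) C(k+1,i+1) (i+1)^(n+1)
      have step1 : ∀ i ∈ range (k+1),
          (-1:ℝ)^(k+1-(i+1)) * (((k+1).choose (i+1) : ℕ) : ℝ) * ((i+1:ℕ):ℝ)^(n+1)
          = (k+1) * ((-1:ℝ)^(k-i) * (k.choose i) * ((i+1:ℕ):ℝ)^n) := by
        intro i hi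
        have hcid : (k+1) * k.choose i = (k+1).choose (i+1) * (i+1) :=
          Nat.add_one_mul_choose_eq k i
        have hcast : ((k+1:ℕ):ℝ) * (k.choose i : ℝ)
            = ((k+1).choose (i+1) : ℝ) * ((i+1:ℕ):ℝ) := by
          exact_mod_cast congrArg (fun m : ℕ => (m:ℝ)) hcid
        have : (k+1-(i+1)) = k - i := by omega
        rw [this, pow_succ]
        push_cast at hcast ⊢
        linear_combination (-((-1:ℝ)^(k-i) * ((i:ℝ)+1)^n)) * hcast
      rw [Finset.sum_congr rfl step1, ← Finset.mul_sum]
      -- reduce to: F n k + F n (k+1) = ∑ (-1)^(k-i) C(k,i) (i+1)^n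
      rw [← mul_add]
      congr 1
      -- F n (k+1) = -F n k + G + 0^n corrections
      rw [Finset.sum_range_succ' (fun j => (-1:ℝ)^(k+1-j) * ((k+1).choose j) * (j:ℝ)^n) (k+1)]
      have pascal : ∀ i ∈ range (k+1),
          (-1:ℝ)^(k+1-(i+1)) * (((k+1).choose (i+1) : ℕ) : ℝ) * ((i+1:ℕ):ℝ)^n
          = (-1:ℝ)^(k-i) * (k.choose i) * ((i+1:ℕ):ℝ)^n
            + (-1:ℝ)^(k-i) * (k.choose (i+1)) * ((i+1:ℕ):ℝ)^n := by
        intro i hi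
        have : (k+1-(i+1)) = k - i := by omega
        rw [this]
        have : (k+1).choose (i+1) = k.choose i + k.choose (i+1) := Nat.choose_succ_succ k i
        rw [this]
        push_cast
        ring
      rw [Finset.sum_congr rfl pascal, Finset.sum_add_distrib]
      -- second sum: ∑_{i∈range(k+1)} (-1)^(k-i) C(k,i+1) (i+1)^n = -(F n k) + (-1)^k 0^n
      have htel : ∑ i ∈ range (k+1), (-1:ℝ)^(k-i) * (k.choose (i+1)) * ((i+1:ℕ):ℝ)^n
          = -(∑ j ∈ range (k+1), (-1:ℝ)^(k-j) * (k.choose j) * (j:ℝ)^n)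
            + (-1:ℝ)^k * ((0:ℕ):ℝ)^n := by
        rw [Finset.sum_range_succ' (fun j => (-1:ℝ)^(k-j) * (k.choose j) * (j:ℝ)^n) k]
        have : ∑ i ∈ range k, (-1:ℝ)^(k-(i+1)) * (k.choose (i+1)) * ((i+1:ℕ):ℝ)^n
            = -∑ i ∈ range k, (-1:ℝ)^(k-i) * (k.choose (i+1)) * ((i+1:ℕ):ℝ)^n := by
          rw [← Finset.sum_neg_distrib]
          refine Finset.sum_congr rfl fun i hi => ?_
          have hik : i < k := mem_range.mp hi
          have h1 : k - i = (k - (i+1)) + 1 := by omega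
          rw [h1, pow_succ]
          ring
        rw [Finset.sum_range_succ (fun i => (-1:ℝ)^(k-i) * (k.choose (i+1)) * ((i+1:ℕ):ℝ)^n) k]
        rw [this]
        simp [Nat.choose_succ_self]
      rw [htel]
      have h0pow : (-1:ℝ)^(k+1-0) * (((k+1).choose 0 : ℕ) : ℝ) * ((0:ℕ):ℝ)^n
          = -((-1:ℝ)^k * ((0:ℕ):ℝ)^n) := by
        simp [pow_succ]
      rw [h0pow]
      ring

lemma lucas_real : ∀ m : ℕ,
    ((1 + Real.sqrt 5) / 2) ^ m + ((1 - Real.sqrt 5) / 2) ^ m = (lucas m : ℝ)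
  | 0 => by show _ = ((2:ℕ):ℝ); push_cast; ring
  | 1 => by
    show _ = ((1:ℕ):ℝ)
    push_cast; ring
  | (m+2) => by
    have h5 : Real.sqrt 5 ^ 2 = 5 := Real.sq_sqrt (by norm_num)
    have ha : ((1 + Real.sqrt 5) / 2) ^ 2 = ((1 + Real.sqrt 5) / 2) + 1 := by
      field_simp; nlinarith [h5]
    have hb : ((1 - Real.sqrt 5) / 2) ^ 2 = ((1 - Real.sqrt 5) / 2) + 1 := by
      field_simp; nlinarith [h5]
    have h1 := lucas_real m
    have h2 := lucas_real (m+1)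
    have : (lucas (m+2) : ℝ) = lucas m + lucas (m+1) := by
      show ((lucas m + lucas (m+1) : ℕ) : ℝ) = _
      push_cast; ring
    rw [this, ← h1, ← h2]
    have e1 : ((1 + Real.sqrt 5) / 2) ^ (m+2)
        = ((1 + Real.sqrt 5) / 2) ^ m * (((1 + Real.sqrt 5) / 2) ^ 2) := by ring
    have e2 : ((1 - Real.sqrt 5) / 2) ^ (m+2)
        = ((1 - Real.sqrt 5) / 2) ^ m * (((1 - Real.sqrt 5) / 2) ^ 2) := by ring
    rw [e1, e2, ha, hb, pow_succ]
    ring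

open Finset Real in
/-- Explicit formula for the Lucas-Fubini numbers. -/
theorem lucasFubini_explicit (n : ℕ) :
    (∑ k ∈ range (n + 1), (lucas (k + 1) * stirling2 n k : ℝ)) =
      ∑ k ∈ range (n + 1), ∑ j ∈ range (k + 1),
        (-1 : ℝ) ^ (k - j) * (k.choose j) *
          ((((1 + Real.sqrt 5) / 2) ^ (k + 1) + ((1 - Real.sqrt 5) / 2) ^ (k + 1)) /
            (k.factorial : ℝ)) * (j : ℝ) ^ n := by
  refine Finset.sum_congr rfl fun k _ => ?_
  have hfac : (k.factorial : ℝ) ≠ 0 := by exact_mod_cast k.factorial_ne_zero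
  have hL := lucas_real (k+1)
  have hS := stirling_explicit n k
  calc (lucas (k+1) * stirling2 n k : ℝ)
      = (lucas (k+1) : ℝ) / (k.factorial : ℝ) * ((k.factorial : ℝ) * stirling2 n k) := by
        field_simp
    _ = (lucas (k+1) : ℝ) / (k.factorial : ℝ)
        * ∑ j ∈ range (k+1), (-1:ℝ)^(k-j) * (k.choose j) * (j:ℝ)^n := by rw [hS]
    _ = _ := by
        rw [Finset.mul_sum, ← hL]
        refine Finset.sum_congr rfl fun j _ => ?_
        ring
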